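/- Let p be a prime and n a positive integer. Let G₁ = Z_{p^{α₁}} × ⋯ × Z_{p^{α_k}} and G₂ = Z_{p^{β₁}} × ⋯ × Z_{p^{β_r}} be abelian p-groups of order p^n, with 1 ≤ α₁ ≤ … ≤ α_k, 1 ≤ β₁ ≤ … ≤ β_r, α₁ + ⋯ + α_k = n and β₁ + ⋯ + β_r = n. Then ψ(G₁) < ψ(G₂) if and only if the n-tuple (α_k, …, α₁, 0, …, 0) (padded with n − k zeros) is strictly smaller than the n-tuple (β_r, …, β₁, 0, …, 0) (padded with n − r zeros) in the lexicographic order. -/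

import Mathlib

open Finset


/-- `psi G` is the sum of the orders of all elements of the finite group `G`. -/
noncomputable def psi (G : Type*) [Monoid G] [Fintype G] : ℕ := ∑ a : G, orderOf a

/-- The `n`-tuple `(α_k, …, α₁, 0, …, 0)` (the exponents in reversed, descending order,
padded with `n - k` zeros) associated to the tuple `α = (α₁, …, α_k)`. -/
def pad {k : ℕ} (α : Fin k → ℕ) (n : ℕ) (j : Fin n) : ℕ :=
  if h : (j : ℕ) < k then α (Fin.rev ⟨j, h⟩) else 0

/-! ### Arithmetic helpers -/

lemma geom_aux (p : ℕ) (hp : 1 ≤ p) {e n : ℕ} (h : e ≤ n) :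
    p ^ e + (p - 1) * ∑ d ∈ Finset.Ico e n, p ^ d = p ^ n := by
  induction n with
  | zero => interval_cases e; simp
  | succ n ih =>
    rcases eq_or_lt_of_le h with rfl | h'
    · simp
    · have he : e ≤ n := Nat.lt_succ_iff.mp h'
      rw [Finset.sum_Ico_succ_top he, Nat.mul_add, ← Nat.add_assoc, ih he]
      calc p^n + (p-1)*p^n = (1+(p-1))*p^n := by ring
        _ = p * p^n := by rw [show 1+(p-1)=p by omega]
        _ = p^(n+1) := by ring

lemma my_geom_lt (p : ℕ) (hp : 2 ≤ p) (M : ℕ) : ∑ x ∈ Finset.range M, p ^ x < p ^ M := by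
  have h := geom_aux p (by omega) (Nat.zero_le M)
  rw [pow_zero] at h
  have h2 : ∑ x ∈ Finset.Ico 0 M, p ^ x ≤ (p - 1) * ∑ x ∈ Finset.Ico 0 M, p ^ x :=
    Nat.le_mul_of_pos_left _ (by omega)
  rw [Finset.range_eq_Ico]
  omega

/-! ### Counting in `ZMod (p^a)` -/

lemma count_zmod (p : ℕ) [Fact p.Prime] (a d : ℕ) :
    (Finset.univ.filter fun x : Multiplicative (ZMod (p^a)) => x ^ (p^d) = 1).card
      = p ^ min a d := by
  have hp : p.Prime := Fact.out
  haveI : NeZero (p^a) := ⟨pow_ne_zero _ hp.ne_zero⟩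
  have hcond : ∀ x : Multiplicative (ZMod (p^a)),
      x ^ (p^d) = 1 ↔ p^a ∣ p^d * (Multiplicative.toAdd x).val := by
    intro x
    rw [show (x ^ (p^d) = 1) ↔ (p^d) • (Multiplicative.toAdd x) = 0 from
      Multiplicative.toAdd.injective.eq_iff.symm]
    rw [show (p^d) • (Multiplicative.toAdd x) = ((p^d * (Multiplicative.toAdd x).val : ℕ) : ZMod (p^a)) by
      rw [nsmul_eq_mul, Nat.cast_mul, Nat.cast_pow, ZMod.natCast_val, ZMod.cast_id]]
    exact ZMod.natCast_eq_zero_iff _ _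
  rcases le_or_gt a d with h | h
  · have hall : ∀ x : Multiplicative (ZMod (p^a)), x ^ (p^d) = 1 := by
      intro x; rw [hcond]; exact dvd_mul_of_dvd_left (pow_dvd_pow p h) _
    rw [min_eq_left h, filter_true_of_mem (fun x _ => hall x), card_univ]
    simp [ZMod.card]
  · rw [min_eq_right h.le]
    have hcpos : 0 < p ^ (a - d) := Nat.pow_pos hp.pos
    have hdpos : 0 < p ^ d := Nat.pow_pos hp.pos
    have hsplit : p ^ a = p ^ (a - d) * p ^ d := by rw [← pow_add]; congr 1; omega
    have key : ∀ v : ℕ, (p^a ∣ p^d * v ↔ p^(a-d) ∣ v) := by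
      intro v
      rw [show p^a = p^d * p^(a-d) by rw [← pow_add]; congr 1; omega,
        Nat.mul_dvd_mul_iff_left hdpos]
    have hc : ∀ x : Multiplicative (ZMod (p^a)),
        x ^ (p^d) = 1 ↔ p^(a-d) ∣ (Multiplicative.toAdd x).val := by
      intro x; rw [hcond, key]
    have hltval : ∀ t : Fin (p^d), p^(a-d) * (t:ℕ) < p^a := by
      intro t; rw [hsplit]; exact mul_lt_mul_of_pos_left t.isLt hcpos
    have hinj : Function.Injective
        (fun t : Fin (p^d) => Multiplicative.ofAdd ((p^(a-d) * (t:ℕ) : ℕ) : ZMod (p^a))) := by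
      intro t1 t2 hte
      have h1 : ((p^(a-d) * (t1:ℕ) : ℕ) : ZMod (p^a)) = ((p^(a-d) * (t2:ℕ) : ℕ) : ZMod (p^a)) :=
        Multiplicative.ofAdd.injective hte
      have hv := congrArg ZMod.val h1
      rw [ZMod.val_cast_of_lt (hltval t1), ZMod.val_cast_of_lt (hltval t2)] at hv
      exact Fin.ext (Nat.eq_of_mul_eq_mul_left hcpos hv)
    have himg : (Finset.univ.filter fun x : Multiplicative (ZMod (p^a)) => x ^ (p^d) = 1)
        = Finset.image (fun t : Fin (p^d) => Multiplicative.ofAdd ((p^(a-d) * (t:ℕ) : ℕ) : ZMod (p^a))) univ := by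
      ext x
      simp only [mem_filter, mem_univ, true_and, Finset.mem_image]
      rw [hc x]
      constructor
      · rintro ⟨s, hs⟩
        have h2 : p^(a-d) * s < p^(a-d) * p^d := by
          rw [← hsplit, ← hs]; exact (Multiplicative.toAdd x).val_lt
        have hslt : s < p ^ d := lt_of_mul_lt_mul_left h2 (le_of_lt hcpos)
        refine ⟨⟨s, hslt⟩, ?_⟩
        have hx : ((p^(a-d) * s : ℕ) : ZMod (p^a)) = Multiplicative.toAdd x := by
          rw [← hs, ZMod.natCast_val, ZMod.cast_id]
        exact Multiplicative.toAdd.injective (by rw [toAdd_ofAdd]; exact hx)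
      · rintro ⟨t, rfl⟩
        rw [toAdd_ofAdd, ZMod.val_cast_of_lt (hltval t)]
        exact Dvd.intro _ rfl
    rw [himg, Finset.card_image_of_injective _ hinj, card_univ, Fintype.card_fin]

/-! ### The psi identity -/

lemma card_pi_filter {ι : Type*} [Fintype ι] [DecidableEq ι] (M : ι → Type*)
    [∀ i, Fintype (M i)] [∀ i, DecidableEq (M i)] (P : ∀ i, M i → Prop)
    [∀ i, DecidablePred (P i)]
    {Q : (∀ i, M i) → Prop} [DecidablePred Q] (hQ : ∀ a, Q a ↔ ∀ i, P i (a i)) :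
    (Finset.univ.filter Q).card
      = ∏ i, (Finset.univ.filter fun x : M i => P i x).card := by
  rw [← Fintype.card_piFinset]
  congr 1
  ext a
  simp [Fintype.mem_piFinset, hQ]

lemma psi_id (p n : ℕ) [Fact p.Prime] (k : ℕ) (α : Fin k → ℕ) (hαs : ∑ i, α i = n) :
    psi (∀ i, Multiplicative (ZMod (p ^ α i)))
      + (p - 1) * ∑ d ∈ Finset.range n, p ^ (d + ∑ i, min (α i) d) = p ^ (2 * n) := by
  have hp : p.Prime := Fact.out
  have hcardi : ∀ i, Fintype.card (Multiplicative (ZMod (p ^ α i))) = p ^ α i := by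
    intro i
    haveI : NeZero (p ^ α i) := ⟨pow_ne_zero _ hp.ne_zero⟩
    simp [ZMod.card]
  have hcard : Fintype.card (∀ i, Multiplicative (ZMod (p ^ α i))) = p ^ n := by
    rw [Fintype.card_pi, Finset.prod_congr rfl (fun i _ => hcardi i),
      Finset.prod_pow_eq_pow_sum, hαs]
  have hpoint : ∀ a : ∀ i, Multiplicative (ZMod (p ^ α i)), orderOf a
      + (p-1) * ∑ d ∈ (Finset.range n).filter (fun d => a ^ (p^d) = 1), p ^ d = p ^ n := by
    intro a
    have hdvd : orderOf a ∣ p ^ n := hcard ▸ orderOf_dvd_card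
    obtain ⟨e, he, hoe⟩ := (Nat.dvd_prime_pow hp).mp hdvd
    have hfe : (Finset.range n).filter (fun d => a ^ (p^d) = 1) = Finset.Ico e n := by
      ext d
      simp only [Finset.mem_filter, Finset.mem_range, Finset.mem_Ico]
      rw [← orderOf_dvd_iff_pow_eq_one, hoe, Nat.pow_dvd_pow_iff_le_right hp.one_lt]
      tauto
    rw [hfe, hoe]
    exact geom_aux p hp.one_le he
  have hcount : ∀ d : ℕ,
      (Finset.univ.filter fun a : ∀ i, Multiplicative (ZMod (p ^ α i)) => a ^ (p^d) = 1).card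
      = p ^ (∑ i, min (α i) d) := by
    intro d
    calc (Finset.univ.filter fun a : ∀ i, Multiplicative (ZMod (p ^ α i)) => a ^ (p^d) = 1).card
        = ∏ i, (Finset.univ.filter fun x : Multiplicative (ZMod (p ^ α i)) => x ^ (p^d) = 1).card := by
          exact card_pi_filter (fun i => Multiplicative (ZMod (p ^ α i)))
            (fun i x => x ^ (p^d) = 1) (fun a => by rw [funext_iff]; exact Iff.rfl)
      _ = ∏ i, p ^ min (α i) d := Finset.prod_congr rfl fun i _ => count_zmod p (α i) d
      _ = p ^ (∑ i, min (α i) d) := Finset.prod_pow_eq_pow_sum _ _ _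
  have hsum : ∑ a : ∀ i, Multiplicative (ZMod (p ^ α i)),
      (orderOf a + (p-1) * ∑ d ∈ (Finset.range n).filter (fun d => a ^ (p^d) = 1), p ^ d)
      = p ^ n * p ^ n := by
    rw [Finset.sum_congr rfl (fun a _ => hpoint a), Finset.sum_const, Finset.card_univ, hcard,
      smul_eq_mul]
  rw [Finset.sum_add_distrib, ← Finset.mul_sum] at hsum
  have hswap : ∑ a : ∀ i, Multiplicative (ZMod (p ^ α i)),
      ∑ d ∈ (Finset.range n).filter (fun d => a ^ (p^d) = 1), p ^ d
      = ∑ d ∈ Finset.range n, p ^ (d + ∑ i, min (α i) d) := by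
    calc ∑ a : ∀ i, Multiplicative (ZMod (p ^ α i)),
        ∑ d ∈ (Finset.range n).filter (fun d => a ^ (p^d) = 1), p ^ d
        = ∑ a : ∀ i, Multiplicative (ZMod (p ^ α i)), ∑ d ∈ Finset.range n,
            if a ^ (p^d) = 1 then p ^ d else 0 :=
          Finset.sum_congr rfl fun a _ => Finset.sum_filter _ _
      _ = ∑ d ∈ Finset.range n, ∑ a : ∀ i, Multiplicative (ZMod (p ^ α i)),
            if a ^ (p^d) = 1 then p ^ d else 0 := Finset.sum_comm
      _ = ∑ d ∈ Finset.range n, p ^ (d + ∑ i, min (α i) d) := by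
          refine Finset.sum_congr rfl fun d _ => ?_
          rw [← Finset.sum_filter, Finset.sum_const, smul_eq_mul, hcount d, mul_comm, ← pow_add]
  rw [hswap] at hsum
  rw [psi, hsum, ← pow_add, two_mul]

/-! ### Combinatorics of partitions -/

def Cf {n : ℕ} (f : Fin n → ℕ) (d : ℕ) : ℕ := ∑ j, min (f j) d

lemma Cf_mono {n : ℕ} (f : Fin n → ℕ) : Monotone (Cf f) := by
  intro d1 d2 h
  exact Finset.sum_le_sum fun j _ => min_le_min le_rfl h

/-- If the first differences of two monotone "column count" functions agree above `D` and
differ at `D`, then the weighted power sums compare strictly. -/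
lemma T_lt (p n : ℕ) (hp : 2 ≤ p) (ca cb : ℕ → ℕ) (hma : Monotone ca) (hmb : Monotone cb)
    {D : ℕ} (hD : D < n) (heq : ∀ d, D < d → ca d = cb d) (hlt : cb D < ca D) :
    ∑ d ∈ Finset.range n, p ^ (d + cb d) < ∑ d ∈ Finset.range n, p ^ (d + ca d) := by
  have hsplit : ∀ c : ℕ → ℕ, ∑ d ∈ Finset.range n, p ^ (d + c d)
      = ∑ d ∈ Finset.range (D+1), p ^ (d + c d) + ∑ d ∈ Finset.Ico (D+1) n, p ^ (d + c d) := by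
    intro c
    rw [Finset.range_eq_Ico, ← Finset.sum_Ico_consecutive (fun d => p ^ (d + c d))
      (Nat.zero_le (D+1)) (by omega : D + 1 ≤ n), ← Finset.range_eq_Ico]
  rw [hsplit ca, hsplit cb]
  have htail : ∑ d ∈ Finset.Ico (D+1) n, p ^ (d + cb d)
      = ∑ d ∈ Finset.Ico (D+1) n, p ^ (d + ca d) := by
    refine Finset.sum_congr rfl fun d hd => ?_
    rw [heq d (Finset.mem_Ico.mp hd).1]
  rw [htail]
  have hhead : ∑ d ∈ Finset.range (D+1), p ^ (d + cb d) < ∑ d ∈ Finset.range (D+1), p ^ (d + ca d) := by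
    have hsm : StrictMono (fun d => d + cb d) := by
      intro d1 d2 h
      have := hmb h.le
      show d1 + cb d1 < d2 + cb d2
      omega
    calc ∑ d ∈ Finset.range (D+1), p ^ (d + cb d)
        = ∑ x ∈ (Finset.range (D+1)).image (fun d => d + cb d), p ^ x := by
          rw [Finset.sum_image (fun x _ y _ h => hsm.injective h)]
      _ ≤ ∑ x ∈ Finset.range (D + cb D + 1), p ^ x := by
          apply Finset.sum_le_sum_of_subset
          intro x hx
          obtain ⟨d, hd, rfl⟩ := Finset.mem_image.mp hx
          have hd' : d ≤ D := Nat.lt_succ_iff.mp (Finset.mem_range.mp hd)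
          have := hmb hd'
          simp only [Finset.mem_range]
          omega
      _ < p ^ (D + cb D + 1) := my_geom_lt p hp _
      _ ≤ p ^ (D + ca D) := Nat.pow_le_pow_right (by omega) (by omega)
      _ ≤ ∑ d ∈ Finset.range (D+1), p ^ (d + ca d) :=
          Finset.single_le_sum (f := fun d => p ^ (d + ca d)) (fun d _ => Nat.zero_le _)
            (Finset.self_mem_range_succ D)
  omega

section Lex

variable {n : ℕ}

/-- The key comparison predicate: the largest `d` where column counts differ favors `a`. -/
def Pb (a b : Fin n → ℕ) : Prop :=
  ∃ D, D < n ∧ (∀ d, D < d → Cf a d = Cf b d) ∧ Cf b D < Cf a D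

lemma Cf_stable (a : Fin n → ℕ) (hsa : ∑ j, a j = n) {d : ℕ} (hd : n ≤ d) : Cf a d = n := by
  have h1 : Cf a d = ∑ j, a j := by
    refine Finset.sum_congr rfl fun j _ => ?_
    have h2 : a j ≤ d :=
      calc a j ≤ ∑ j, a j := Finset.single_le_sum (f := a) (fun j _ => Nat.zero_le _) (mem_univ j)
        _ = n := hsa
        _ ≤ d := hd
    exact min_eq_left h2
  rw [h1, hsa]

lemma tri (a b : Fin n → ℕ) (hsa : ∑ j, a j = n) (hsb : ∑ j, b j = n) :
    Pb a b ∨ Pb b a ∨ ∀ d, Cf a d = Cf b d := by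
  by_cases hall : ∀ d, Cf a d = Cf b d
  · exact Or.inr (Or.inr hall)
  push_neg at hall
  obtain ⟨d0, hd0⟩ := hall
  have hd0n : d0 < n := by
    by_contra hc
    exact hd0 (by rw [Cf_stable a hsa (not_lt.mp hc), Cf_stable b hsb (not_lt.mp hc)])
  set S := (Finset.range n).filter (fun d => Cf a d ≠ Cf b d) with hS
  have hne : S.Nonempty := ⟨d0, by simp [hS, hd0n, hd0]⟩
  set D := S.max' hne with hD
  have hDS : D ∈ S := S.max'_mem hne
  have hDn : D < n := Finset.mem_range.mp (Finset.mem_filter.mp hDS).1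
  have hDneq : Cf a D ≠ Cf b D := (Finset.mem_filter.mp hDS).2
  have heq : ∀ d, D < d → Cf a d = Cf b d := by
    intro d hd
    rcases lt_or_ge d n with h | h
    · by_contra hne'
      have : d ∈ S := Finset.mem_filter.mpr ⟨Finset.mem_range.mpr h, hne'⟩
      exact absurd (S.le_max' d this) (by omega)
    · rw [Cf_stable a hsa h, Cf_stable b hsb h]
  rcases lt_or_gt_of_ne hDneq with h | h
  · exact Or.inr (Or.inl ⟨D, hDn, fun d hd => (heq d hd).symm, h⟩)
  · exact Or.inl ⟨D, hDn, heq, h⟩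

lemma lex_to_P (a b : Fin n → ℕ) (ha : Antitone a) (hb : Antitone b)
    (hsa : ∑ j, a j = n) (hsb : ∑ j, b j = n)
    (m : Fin n) (hpre : ∀ j, j < m → a j = b j) (hm : a m < b m) : Pb a b := by
  have hbm : (b m : ℕ) ≤ n :=
    calc b m ≤ ∑ j, b j := Finset.single_le_sum (f := b) (fun j _ => Nat.zero_le _) (mem_univ m)
      _ = n := hsb
  have ham : (a m : ℕ) < n := lt_of_lt_of_le hm hbm
  -- prefix sums agree, hence suffix sums agree
  have hpresum : ∀ g : Fin n → ℕ → ℕ, (∀ j, j < m → g j = fun x => x) → True := fun _ _ => trivial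
  have hprefix : ∑ j ∈ univ.filter (fun j => j < m), a j
      = ∑ j ∈ univ.filter (fun j => j < m), b j :=
    Finset.sum_congr rfl fun j hj => hpre j (Finset.mem_filter.mp hj).2
  have hsplita : ∑ j ∈ univ.filter (fun j => j < m), a j
      + ∑ j ∈ univ.filter (fun j => ¬ j < m), a j = n := by
    rw [Finset.sum_filter_add_sum_filter_not]; exact hsa
  have hsplitb : ∑ j ∈ univ.filter (fun j => j < m), b j
      + ∑ j ∈ univ.filter (fun j => ¬ j < m), b j = n := by
    rw [Finset.sum_filter_add_sum_filter_not]; exact hsb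
  have hsuffix : ∑ j ∈ univ.filter (fun j => ¬ j < m), a j
      = ∑ j ∈ univ.filter (fun j => ¬ j < m), b j := by omega
  have hCsplit : ∀ (f : Fin n → ℕ) (d : ℕ), Cf f d
      = ∑ j ∈ univ.filter (fun j => j < m), min (f j) d
        + ∑ j ∈ univ.filter (fun j => ¬ j < m), min (f j) d :=
    fun f d => (Finset.sum_filter_add_sum_filter_not _ _ _).symm
  have hCpre : ∀ d : ℕ, ∑ j ∈ univ.filter (fun j => j < m), min (a j) d
      = ∑ j ∈ univ.filter (fun j => j < m), min (b j) d := by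
    intro d
    refine Finset.sum_congr rfl fun j hj => ?_
    rw [hpre j (Finset.mem_filter.mp hj).2]
  have hCsufa : ∀ d : ℕ, (a m : ℕ) ≤ d →
      ∑ j ∈ univ.filter (fun j => ¬ j < m), min (a j) d
        = ∑ j ∈ univ.filter (fun j => ¬ j < m), a j := by
    intro d hd
    refine Finset.sum_congr rfl fun j hj => ?_
    have hmj : m ≤ j := not_lt.mp (Finset.mem_filter.mp hj).2
    exact min_eq_left ((ha hmj).trans hd)
  -- Sub1 : for all d ≥ a m, Cf b d ≤ Cf a d
  have sub1 : ∀ d : ℕ, (a m : ℕ) ≤ d → Cf b d ≤ Cf a d := by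
    intro d hd
    rw [hCsplit a, hCsplit b, hCpre d, hCsufa d hd]
    have : ∑ j ∈ univ.filter (fun j => ¬ j < m), min (b j) d
        ≤ ∑ j ∈ univ.filter (fun j => ¬ j < m), b j :=
      Finset.sum_le_sum fun j _ => min_le_left _ _
    omega
  -- Sub2 : strict at d = a m
  have sub2 : Cf b (a m) < Cf a (a m) := by
    rw [hCsplit a, hCsplit b, hCpre, hCsufa _ le_rfl]
    have hstrict : ∑ j ∈ univ.filter (fun j => ¬ j < m), min (b j) (a m)
        < ∑ j ∈ univ.filter (fun j => ¬ j < m), b j := by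
      refine Finset.sum_lt_sum (fun j _ => min_le_left _ _) ⟨m, ?_, ?_⟩
      · exact Finset.mem_filter.mpr ⟨mem_univ m, lt_irrefl m⟩
      · rw [min_eq_right hm.le]; exact hm
    omega
  -- now take the maximum differing index
  set S := (Finset.range n).filter (fun d => Cf a d ≠ Cf b d) with hS
  have hmem : (a m : ℕ) ∈ S := Finset.mem_filter.mpr ⟨Finset.mem_range.mpr ham, (sub2.ne).symm⟩
  have hne : S.Nonempty := ⟨_, hmem⟩
  set D := S.max' hne with hD
  have hDS : D ∈ S := S.max'_mem hne
  have hDn : D < n := Finset.mem_range.mp (Finset.mem_filter.mp hDS).1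
  have hDneq : Cf a D ≠ Cf b D := (Finset.mem_filter.mp hDS).2
  have hamD : (a m : ℕ) ≤ D := S.le_max' _ hmem
  refine ⟨D, hDn, ?_, lt_of_le_of_ne (sub1 D hamD) hDneq.symm⟩
  intro d hd
  rcases lt_or_ge d n with h | h
  · by_contra hne'
    have : d ∈ S := Finset.mem_filter.mpr ⟨Finset.mem_range.mpr h, hne'⟩
    exact absurd (S.le_max' d this) (by omega)
  · rw [Cf_stable a hsa h, Cf_stable b hsb h]

lemma P_asymm (a b : Fin n → ℕ) (h1 : Pb a b) (h2 : Pb b a) : False := by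
  obtain ⟨D, hDn, heq, hlt⟩ := h1
  obtain ⟨D', hDn', heq', hlt'⟩ := h2
  rcases lt_trichotomy D D' with h | rfl | h
  · have := heq D' h
    omega
  · omega
  · have := heq' D h
    omega

lemma lex_iff_P (a b : Fin n → ℕ) (ha : Antitone a) (hb : Antitone b)
    (hsa : ∑ j, a j = n) (hsb : ∑ j, b j = n) :
    (∃ m : Fin n, (∀ j : Fin n, j < m → a j = b j) ∧ a m < b m) ↔ Pb a b := by
  constructor
  · rintro ⟨m, hpre, hm⟩
    exact lex_to_P a b ha hb hsa hsb m hpre hm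
  · intro hP
    have hne : a ≠ b := by
      rintro rfl
      obtain ⟨D, _, _, hlt⟩ := hP
      omega
    have hset : (univ.filter (fun j : Fin n => a j ≠ b j)).Nonempty := by
      by_contra hc
      rw [Finset.not_nonempty_iff_eq_empty, Finset.filter_eq_empty_iff] at hc
      exact hne (funext fun j => not_not.mp (hc (mem_univ j)))
    set m := (univ.filter (fun j : Fin n => a j ≠ b j)).min' hset with hm
    have hmS : m ∈ univ.filter (fun j : Fin n => a j ≠ b j) := Finset.min'_mem _ _
    have hmne : a m ≠ b m := (Finset.mem_filter.mp hmS).2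
    have hpre : ∀ j, j < m → a j = b j := by
      intro j hj
      by_contra hc
      exact absurd (Finset.min'_le _ j (Finset.mem_filter.mpr ⟨mem_univ j, hc⟩)) (by
        rw [← hm]; exact not_le.mpr hj)
    rcases lt_or_gt_of_ne hmne with h | h
    · exact ⟨m, hpre, h⟩
    · exfalso
      exact P_asymm a b hP
        (lex_to_P b a hb ha hsb hsa m (fun j hj => (hpre j hj).symm) h)

end Lex

/-! ### Properties of `pad` -/

lemma pad_antitone {k n : ℕ} (α : Fin k → ℕ) (hαm : Monotone α) : Antitone (pad α n) := by
  intro j1 j2 h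
  unfold pad
  by_cases h2 : (j2 : ℕ) < k
  · have h1 : (j1 : ℕ) < k := lt_of_le_of_lt (by exact_mod_cast h) h2
    rw [dif_pos h1, dif_pos h2]
    apply hαm
    rw [Fin.rev_le_rev]
    exact h
  · rw [dif_neg h2]
    exact Nat.zero_le _

lemma pad_sum_eq {k n : ℕ} (α : Fin k → ℕ) (hα1 : ∀ i, 1 ≤ α i) (hαs : ∑ i, α i = n)
    (F : ℕ → ℕ) (hF : F 0 = 0) :
    ∑ j : Fin n, F (pad α n j) = ∑ i : Fin k, F (α i) := by
  have hk : k ≤ n := by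
    calc k = ∑ _i : Fin k, 1 := by simp
      _ ≤ ∑ i, α i := Finset.sum_le_sum fun i _ => hα1 i
      _ = n := hαs
  rcases Nat.eq_zero_or_pos k with rfl | hk1
  · have : n = 0 := by rw [← hαs]; simp
    subst this
    simp
  have h1 : ∑ j : Fin n, F (pad α n j)
      = ∑ j ∈ (univ : Finset (Fin n)).filter (fun j : Fin n => (j : ℕ) < k), F (pad α n j) := by
    symm
    apply Finset.sum_filter_of_ne
    intro j _ hFj
    by_contra hc
    rw [pad, dif_neg hc, hF] at hFj
    exact hFj rfl
  rw [h1]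
  refine Finset.sum_nbij'
    (i := fun j : Fin n => if h : (j : ℕ) < k then Fin.rev ⟨(j : ℕ), h⟩ else ⟨0, hk1⟩)
    (j := fun i : Fin k => ⟨((Fin.rev i : Fin k) : ℕ), lt_of_lt_of_le (Fin.rev i).isLt hk⟩)
    ?_ ?_ ?_ ?_ ?_
  · intro j hj
    exact mem_univ _
  · intro i _
    refine Finset.mem_filter.mpr ⟨mem_univ _, ?_⟩
    exact (Fin.rev i).isLt
  · intro j hj
    have hjk : (j : ℕ) < k := (Finset.mem_filter.mp hj).2
    simp only [dif_pos hjk]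
    apply Fin.ext
    simp [Fin.ext_iff, Fin.val_rev]
  · intro i _
    have hik : ((Fin.rev i : Fin k) : ℕ) < k := (Fin.rev i).isLt
    dsimp only
    simp only [dif_pos hik]
    apply Fin.ext
    simp [Fin.ext_iff, Fin.val_rev]
    omega
  · intro j hj
    have hjk : (j : ℕ) < k := (Finset.mem_filter.mp hj).2
    rw [pad]
    simp only [dif_pos hjk]

theorem psi_lt_iff_lex (p n k r : ℕ) [Fact p.Prime] (hn : 0 < n)
    (α : Fin k → ℕ) (β : Fin r → ℕ)
    (hα1 : ∀ i, 1 ≤ α i) (hαm : Monotone α) (hαs : ∑ i, α i = n)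
    (hβ1 : ∀ i, 1 ≤ β i) (hβm : Monotone β) (hβs : ∑ i, β i = n) :
    psi (∀ i, Multiplicative (ZMod (p ^ α i))) < psi (∀ i, Multiplicative (ZMod (p ^ β i))) ↔
      ∃ m : Fin n, (∀ j : Fin n, j < m → pad α n j = pad β n j) ∧ pad α n m < pad β n m := by
  have hp : p.Prime := Fact.out
  have hp2 : 2 ≤ p := hp.two_le
  -- column counts in terms of pad
  have hCα : ∀ d : ℕ, (∑ i, min (α i) d) = Cf (pad α n) d := by
    intro d
    rw [Cf, pad_sum_eq α hα1 hαs (fun x => min x d) (by simp)]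
  have hCβ : ∀ d : ℕ, (∑ i, min (β i) d) = Cf (pad β n) d := by
    intro d
    rw [Cf, pad_sum_eq β hβ1 hβs (fun x => min x d) (by simp)]
  have hsa : ∑ j, pad α n j = n := by
    rw [pad_sum_eq α hα1 hαs (fun x => x) rfl, hαs]
  have hsb : ∑ j, pad β n j = n := by
    rw [pad_sum_eq β hβ1 hβs (fun x => x) rfl, hβs]
  have hidα := psi_id p n k α hαs
  have hidβ := psi_id p n r β hβs
  simp only [hCα] at hidα
  simp only [hCβ] at hidβ
  set Ta := ∑ d ∈ Finset.range n, p ^ (d + Cf (pad α n) d) with hTa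
  set Tb := ∑ d ∈ Finset.range n, p ^ (d + Cf (pad β n) d) with hTb
  have key : psi (∀ i, Multiplicative (ZMod (p ^ α i)))
      < psi (∀ i, Multiplicative (ZMod (p ^ β i))) ↔ Tb < Ta := by
    constructor
    · intro h
      by_contra hc
      have hle : Ta ≤ Tb := not_lt.mp hc
      have : (p-1) * Ta ≤ (p-1) * Tb := Nat.mul_le_mul_left _ hle
      omega
    · intro h
      have : (p-1) * Tb < (p-1) * Ta :=
        mul_lt_mul_of_pos_left h (by omega : 0 < p - 1)
      omega
  rw [key,
    lex_iff_P (pad α n) (pad β n) (pad_antitone α hαm) (pad_antitone β hβm) hsa hsb]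
  -- T comparison iff Pb
  constructor
  · intro h
    rcases tri (pad α n) (pad β n) hsa hsb with hP | hP | hall
    · exact hP
    · exfalso
      obtain ⟨D, hDn, heq, hlt⟩ := hP
      have : Ta < Tb := T_lt p n hp2 _ _ (Cf_mono _) (Cf_mono _) hDn heq hlt
      omega
    · exfalso
      have : Ta = Tb := Finset.sum_congr rfl fun d _ => by rw [hall d]
      omega
  · intro h
    obtain ⟨D, hDn, heq, hlt⟩ := h
    exact T_lt p n hp2 _ _ (Cf_mono _) (Cf_mono _) hDn heq hlt
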